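/- Let m ≥ 1 be an integer, ω = (ω_0, …, ω_m) ∈ ℝ^{m+1}, T > 0 and t > 0. Then ∫_{{s ∈ ℝ_{≥0}^{m} : s_0 + … + s_{m−1} ≤ t}} exp(i ∑_{r=0}^{m−1} s_r ω_r) · exp(i (t − s_0 − … − s_{m−1}) ω_m) ds_0 ⋯ ds_{m−1} = (e^{t/T}/(2π)) · i^{m+1} · ∫_ℝ [∏_{r=0}^{m} (α + ω_r + i/T)^{−1}] e^{−iαt} dα. Moreover, for every t < 0 the integral ∫_ℝ [∏_{r=0}^{m} (α + ω_r + i/T)^{−1}] e^{−iαt} dα vanishes. -/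

import Mathlib

open MeasureTheory Complex Real Filter Topology Set
open scoped FourierTransform RealInnerProductSpace

noncomputable section
set_option maxHeartbeats 1000000
namespace Stmt8Aux

/-- Damped oscillatory exponential supported on `[0, ∞)`. -/
def bf (c : ℂ) : ℝ → ℂ := Set.indicator (Set.Ici 0) (fun s : ℝ => Complex.exp (Complex.I * s * c))

lemma re_I_mul_ofReal_mul (s : ℝ) (c : ℂ) : (Complex.I * s * c).re = -(s * c.im) := by
  simp [Complex.mul_re, Complex.mul_im]

lemma bf_norm (c : ℂ) (s : ℝ) :
    ‖bf c s‖ = Set.indicator (Set.Ici 0) (fun s : ℝ => Real.exp (-(s * c.im))) s := by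
  unfold bf
  by_cases h : s ∈ Set.Ici (0:ℝ) <;>
    simp [h, Complex.norm_exp, re_I_mul_ofReal_mul]

lemma bf_norm_le_one {c : ℂ} (hc : 0 ≤ c.im) (s : ℝ) : ‖bf c s‖ ≤ 1 := by
  rw [bf_norm]
  by_cases h : s ∈ Set.Ici (0:ℝ)
  · rw [Set.indicator_of_mem h]
    rw [Set.mem_Ici] at h
    exact Real.exp_le_one_iff.2 (by nlinarith)
  · rw [Set.indicator_of_notMem h]; norm_num

lemma bf_measurable (c : ℂ) : Measurable (bf c) := by
  apply Measurable.indicator _ measurableSet_Ici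
  fun_prop

lemma bf_integrable {c : ℂ} (hc : 0 < c.im) : Integrable (bf c) := by
  rw [bf, integrable_indicator_iff measurableSet_Ici]
  rw [integrableOn_Ici_iff_integrableOn_Ioi]
  apply Integrable.mono' (exp_neg_integrableOn_Ioi 0 hc)
  · exact (Continuous.aestronglyMeasurable (by fun_prop)).restrict
  · filter_upwards with s
    rw [Complex.norm_exp, re_I_mul_ofReal_mul]
    exact le_of_eq (by ring_nf)

lemma bf_fourier {c : ℂ} (hc : 0 < c.im) (ξ : ℝ) :
    𝓕 (bf c) ξ = Complex.I * (c - 2 * π * ξ)⁻¹ := by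
  have hane : (Complex.I * (c - 2 * π * ξ)) ≠ 0 := by
    apply mul_ne_zero Complex.I_ne_zero
    intro h
    have : (c - 2 * π * ξ).im = 0 := by rw [h]; simp
    simp [Complex.sub_im] at this
    exact hc.ne' this
  set a : ℂ := Complex.I * (c - 2 * π * ξ) with ha
  have hare : a.re = -c.im := by
    rw [ha]; simp [Complex.mul_re]
  rw [Real.fourier_real_eq_integral_exp_smul]
  have h1 : ∀ v : ℝ, Complex.exp (↑(-2 * π * v * ξ) * Complex.I) • bf c v
      = Set.indicator (Set.Ici 0) (fun v : ℝ => Complex.exp (a * v)) v := by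
    intro v
    unfold bf
    by_cases h : v ∈ Set.Ici (0:ℝ)
    · rw [Set.indicator_of_mem h, Set.indicator_of_mem h, smul_eq_mul, ← Complex.exp_add]
      congr 1
      push_cast
      ring
    · rw [Set.indicator_of_notMem h, Set.indicator_of_notMem h, smul_eq_mul, mul_zero]
  rw [show (∫ v : ℝ, Complex.exp (↑(-2 * π * v * ξ) * Complex.I) • bf c v)
      = ∫ v : ℝ, Set.indicator (Set.Ici 0) (fun v : ℝ => Complex.exp (a * v)) v from
      integral_congr_ae (Filter.Eventually.of_forall h1)]
  rw [integral_indicator measurableSet_Ici, integral_Ici_eq_integral_Ioi]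
  have D : ∀ x : ℝ, HasDerivAt (fun y : ℝ => Complex.exp (a * y) / a) (Complex.exp (a * x)) x := by
    intro x
    rw [← mul_div_cancel_right₀ (Complex.exp (a * x)) hane]
    apply ((Complex.hasDerivAt_exp _).comp x _).div_const a
    have := ((hasDerivAt_id' (x : ℂ)).const_mul a).comp_ofReal
    simp only [mul_one] at this
    exact this
  have hnorm : ∀ x : ℝ, ‖Complex.exp (a * x)‖ = Real.exp (-(c.im * x)) := by
    intro x
    rw [Complex.norm_exp]
    congr 1
    rw [show (a * (x:ℂ)).re = a.re * x by simp [Complex.mul_re], hare]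
    ring
  have hint : IntegrableOn (fun x : ℝ => Complex.exp (a * x)) (Set.Ioi 0) := by
    apply Integrable.mono' (exp_neg_integrableOn_Ioi 0 hc)
    · exact (Continuous.aestronglyMeasurable (by fun_prop)).restrict
    · filter_upwards with s
      rw [hnorm s]
      exact le_of_eq (by ring_nf)
  have htends : Tendsto (fun y : ℝ => Complex.exp (a * y) / a) atTop (𝓝 0) := by
    rw [tendsto_zero_iff_norm_tendsto_zero]
    have hmul : Tendsto (fun y : ℝ => c.im * y) atTop atTop :=
      Tendsto.const_mul_atTop hc tendsto_id
    have hneg : Tendsto (fun y : ℝ => -(c.im * y)) atTop atBot := tendsto_neg_atBot_iff.2 hmul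
    have h2 : Tendsto (fun y : ℝ => Real.exp (-(c.im * y))) atTop (𝓝 0) := by
      exact Real.tendsto_exp_atBot.comp hneg
    have h3 := h2.div_const ‖a‖
    rw [zero_div] at h3
    exact h3.congr (fun y => by rw [norm_div, hnorm y])
  have := integral_Ioi_of_hasDerivAt_of_tendsto
    (f := fun y : ℝ => Complex.exp (a * y) / a) (f' := fun x : ℝ => Complex.exp (a * x))
    ((D 0).continuousAt.continuousWithinAt) (fun x _ => D x) hint htends
  rw [this]
  simp only [Complex.ofReal_zero, mul_zero, Complex.exp_zero, zero_sub]
  rw [ha, one_div, mul_inv, Complex.inv_I]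
  ring

lemma bf_of_nonneg {c : ℂ} {x : ℝ} (hx : 0 ≤ x) : bf c x = Complex.exp (Complex.I * x * c) :=
  Set.indicator_of_mem hx _

lemma bf_of_neg {c : ℂ} {x : ℝ} (hx : x < 0) : bf c x = 0 :=
  Set.indicator_of_notMem (by simpa using not_le.2 hx) _

lemma bf_continuousAt {c : ℂ} {u : ℝ} (hu : u ≠ 0) : ContinuousAt (bf c) u := by
  rcases lt_or_gt_of_ne hu with h | h
  · have hev : (fun _ : ℝ => (0:ℂ)) =ᶠ[𝓝 u] bf c := by
      filter_upwards [Iio_mem_nhds h] with v hv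
      exact (bf_of_neg hv).symm
    exact continuousAt_const.congr hev
  · have hev : (fun v : ℝ => Complex.exp (Complex.I * v * c)) =ᶠ[𝓝 u] bf c := by
      filter_upwards [Ioi_mem_nhds h] with v hv
      exact (bf_of_nonneg (le_of_lt hv)).symm
    exact (Continuous.continuousAt (by fun_prop)).congr hev

variable {m : ℕ}

def FF (c : Fin (m+1) → ℂ) : (Fin m → ℝ) → ℂ :=
  fun s => ∏ r : Fin m, bf (c r.castSucc) (s r)

def gg (c : Fin (m+1) → ℂ) : ℝ → ℂ :=
  fun t => ∫ s : Fin m → ℝ, FF c s * bf (c (Fin.last m)) (t - ∑ r, s r)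

def HH (c : Fin (m+1) → ℂ) : ℝ × (Fin m → ℝ) → ℂ :=
  fun p => FF c p.2 * bf (c (Fin.last m)) (p.1 - ∑ r, p.2 r)

lemma FF_meas (c : Fin (m+1) → ℂ) : Measurable (FF c) :=
  Finset.measurable_prod _ fun r _ => (bf_measurable _).comp (measurable_pi_apply r)

lemma FF_int {c : Fin (m+1) → ℂ} (hc : ∀ r, 0 < (c r).im) : Integrable (FF c) :=
  Integrable.fintype_prod fun r => bf_integrable (hc _)

lemma sum_meas : Measurable fun s : Fin m → ℝ => ∑ r, s r :=
  Finset.measurable_sum _ fun r _ => measurable_pi_apply r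

lemma HH_meas (c : Fin (m+1) → ℂ) : Measurable (HH c) :=
  ((FF_meas c).comp measurable_snd).mul
    ((bf_measurable _).comp (measurable_fst.sub (sum_meas.comp measurable_snd)))

lemma HH_int {c : Fin (m+1) → ℂ} (hc : ∀ r, 0 < (c r).im) :
    Integrable (HH c) (volume.prod volume) := by
  refine (integrable_prod_iff' ((HH_meas c).aestronglyMeasurable (μ := volume.prod volume))).2
    ⟨?_, ?_⟩
  · filter_upwards with s
    exact (Integrable.comp_sub_right (bf_integrable (hc _)) (∑ r, s r)).const_mul (FF c s)
  · have heq : ∀ s : Fin m → ℝ, (∫ t : ℝ, ‖HH c (t, s)‖)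
        = ‖FF c s‖ * ∫ t : ℝ, ‖bf (c (Fin.last m)) t‖ := by
      intro s
      unfold HH
      simp only [norm_mul]
      rw [integral_const_mul]
      congr 1
      exact integral_sub_right_eq_self (fun t => ‖bf (c (Fin.last m)) t‖) (∑ r, s r)
    rw [show (fun s : Fin m → ℝ => ∫ t : ℝ, ‖HH c (t, s)‖)
        = fun s => ‖FF c s‖ * ∫ t : ℝ, ‖bf (c (Fin.last m)) t‖ from funext heq]
    exact ((FF_int hc).norm).mul_const _

lemma gg_int {c : Fin (m+1) → ℂ} (hc : ∀ r, 0 < (c r).im) : Integrable (gg c) :=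
  (HH_int hc).integral_prod_left


lemma exp_ofReal_mul_I_norm (x : ℝ) : ‖Complex.exp (↑x * Complex.I)‖ = 1 := by
  rw [Complex.norm_exp]
  simp

def ee (ξ : ℝ) (t : ℝ) : ℂ := Complex.exp (↑(-2 * π * t * ξ) * Complex.I)

lemma gg_fourier {c : Fin (m+1) → ℂ} (hc : ∀ r, 0 < (c r).im) (ξ : ℝ) :
    𝓕 (gg c) ξ = ∏ r : Fin (m+1), (Complex.I * (c r - 2 * π * ξ)⁻¹) := by
  have eadd : ∀ x y : ℝ, ee ξ (x + y) = ee ξ x * ee ξ y := by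
    intro x y
    rw [ee, ee, ee, ← Complex.exp_add]
    congr 1
    push_cast
    ring
  have hbfF : ∀ c' : ℂ, (∫ x : ℝ, ee ξ x * bf c' x) = 𝓕 (bf c') ξ := by
    intro c'
    rw [Real.fourier_real_eq_integral_exp_smul]
    apply integral_congr_ae
    filter_upwards with x
    simp only [smul_eq_mul, ee]
  have heHint : Integrable (fun p : ℝ × (Fin m → ℝ) => ee ξ p.1 * HH c p) (volume.prod volume) := by
    apply Integrable.mono' (HH_int hc).norm
    · have meas1 : Measurable fun t : ℝ => ee ξ t := by unfold ee; fun_prop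
      exact ((meas1.comp measurable_fst).mul (HH_meas c)).aestronglyMeasurable
    · filter_upwards with p
      rw [norm_mul, ee, exp_ofReal_mul_I_norm, one_mul]
  calc 𝓕 (gg c) ξ = ∫ t : ℝ, ee ξ t * gg c t := by
        rw [Real.fourier_real_eq_integral_exp_smul]
        apply integral_congr_ae
        filter_upwards with t
        simp only [smul_eq_mul, ee]
    _ = ∫ t : ℝ, ∫ s : Fin m → ℝ, ee ξ t * HH c (t, s) := by
        apply integral_congr_ae
        filter_upwards with t
        rw [gg, ← integral_const_mul]
        rfl
    _ = ∫ s : Fin m → ℝ, ∫ t : ℝ, ee ξ t * HH c (t, s) := by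
        rw [← MeasureTheory.integral_prod _ heHint, MeasureTheory.integral_prod_symm _ heHint]
    _ = ∫ s : Fin m → ℝ, (FF c s * ee ξ (∑ r, s r)) * 𝓕 (bf (c (Fin.last m))) ξ := by
        apply integral_congr_ae
        filter_upwards with s
        have : ∀ t : ℝ, ee ξ t * HH c (t, s)
            = FF c s * (ee ξ t * bf (c (Fin.last m)) (t - ∑ r, s r)) := by
          intro t; rw [HH]; ring
        rw [integral_congr_ae (Filter.Eventually.of_forall this), integral_const_mul]
        have subst := integral_add_right_eq_self (μ := (volume : Measure ℝ))
          (fun t : ℝ => ee ξ t * bf (c (Fin.last m)) (t - ∑ r, s r)) (∑ r, s r)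
        rw [← subst]
        have : ∀ x : ℝ, ee ξ (x + ∑ r, s r) * bf (c (Fin.last m)) (x + (∑ r, s r) - ∑ r, s r)
            = ee ξ (∑ r, s r) * (ee ξ x * bf (c (Fin.last m)) x) := by
          intro x
          rw [add_sub_cancel_right, eadd]
          ring
        rw [integral_congr_ae (Filter.Eventually.of_forall this), integral_const_mul, hbfF]
        ring
    _ = (∫ s : Fin m → ℝ, ∏ r : Fin m, (bf (c r.castSucc) (s r) * ee ξ (s r)))
          * 𝓕 (bf (c (Fin.last m))) ξ := by
        rw [integral_mul_const]
        congr 2 with s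
        rw [FF, Finset.prod_mul_distrib]
        simp only [ee]
        rw [← Complex.exp_sum]
        congr 1
        have harg : ((-2 * π * ∑ r : Fin m, s r) * ξ : ℝ)
            = ∑ r : Fin m, (-2 * π * (s r) * ξ) := by
          rw [← Finset.sum_mul, ← Finset.mul_sum]
        rw [harg, Complex.ofReal_sum, Finset.sum_mul]
    _ = (∏ r : Fin m, 𝓕 (bf (c r.castSucc)) ξ) * 𝓕 (bf (c (Fin.last m))) ξ := by
        rw [MeasureTheory.integral_fintype_prod_volume_eq_prod
          (f := fun (r : Fin m) (x : ℝ) => bf (c r.castSucc) x * ee ξ x)]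
        congr 1
        refine Finset.prod_congr rfl fun r _ => ?_
        rw [← hbfF]
        congr 1 with x
        ring
    _ = ∏ r : Fin (m+1), 𝓕 (bf (c r)) ξ := by rw [Fin.prod_univ_castSucc]
    _ = ∏ r : Fin (m+1), (Complex.I * (c r - 2 * π * ξ)⁻¹) :=
        Finset.prod_congr rfl fun r _ => bf_fourier (hc r) ξ



lemma Q_integrable (a : ℝ) {k : ℝ} (hk : 0 < k) :
    Integrable (fun ξ : ℝ => ((a - 2*π*ξ)^2 + k^2)⁻¹) := by
  have h1 : Integrable (fun x : ℝ => (1 + (k⁻¹ * x)^2)⁻¹) :=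
    integrable_inv_one_add_sq.comp_mul_left' (inv_ne_zero hk.ne')
  have h3 : Integrable (fun x : ℝ => (x^2 + k^2)⁻¹) := by
    have h2 : ∀ x : ℝ, (x^2 + k^2)⁻¹ = k⁻¹^2 * (1 + (k⁻¹*x)^2)⁻¹ := by
      intro x
      rw [eq_comm, mul_inv_eq_iff_eq_mul₀ (by positivity)]
      field_simp
      ring
    rw [funext h2]
    exact h1.const_mul _
  have h4 : Integrable (fun y : ℝ => ((y - a)^2 + k^2)⁻¹) := h3.comp_sub_right a
  have h5 := h4.comp_mul_left' (show (2*π) ≠ 0 by positivity)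
  apply h5.congr
  filter_upwards with ξ
  rw [show (2*π*ξ - a) = -(a - 2*π*ξ) by ring, neg_sq]

lemma hyperplane_null (hm : 1 ≤ m) (t : ℝ) :
    (volume : Measure (Fin m → ℝ)) {s | ∑ r, s r = t} = 0 := by
  classical
  let L : (Fin m → ℝ) →ₗ[ℝ] ℝ := ∑ r, LinearMap.proj r
  have hL : ∀ s : Fin m → ℝ, L s = ∑ r, s r := by
    intro s
    simp [L]
  have hm0 : (m : ℝ) ≠ 0 := Nat.cast_ne_zero.2 (by omega)
  let p : Fin m → ℝ := fun _ => t / m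
  have hp : L p = t := by
    rw [hL]
    simp only [p, Finset.sum_const, Finset.card_univ, Fintype.card_fin, nsmul_eq_mul]
    field_simp
  let S : AffineSubspace ℝ (Fin m → ℝ) := AffineSubspace.mk' p (LinearMap.ker L)
  have hset : {s : Fin m → ℝ | ∑ r, s r = t} = (S : Set (Fin m → ℝ)) := by
    ext s
    simp only [Set.mem_setOf_eq, S, AffineSubspace.mem_coe, AffineSubspace.mem_mk',
      LinearMap.mem_ker, vsub_eq_sub, map_sub, hL, hp]
    have h2 : ∑ r : Fin m, (s - p) r = (∑ r, s r) - ∑ r, p r := by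
      simp [Finset.sum_sub_distrib]
    rw [h2, sub_eq_zero, show (∑ r : Fin m, p r) = t from by rw [← hL]; exact hp]
  rw [hset]
  apply Measure.addHaar_affineSubspace
  intro htop
  have hd : (S.direction : Submodule ℝ (Fin m → ℝ)) = ⊤ := by
    rw [htop]
    exact AffineSubspace.direction_top ℝ _ _
  rw [show S.direction = LinearMap.ker L from AffineSubspace.direction_mk' p _] at hd
  rw [LinearMap.ker_eq_top] at hd
  have : L (fun _ => 1) = 0 := by rw [hd]; rfl
  rw [hL] at this
  simp at this
  exact absurd this (by omega)


lemma gg_contAt {c : Fin (m+1) → ℂ} (hc : ∀ r, 0 < (c r).im) (hm : 1 ≤ m) {t : ℝ}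
    (ht : t ≠ 0) : ContinuousAt (gg c) t := by
  have hnull : ∀ᵐ s : Fin m → ℝ, ∑ r, s r ≠ t := by
    rw [ae_iff]
    have : {s : Fin m → ℝ | ¬ ∑ r, s r ≠ t} = {s : Fin m → ℝ | ∑ r, s r = t} := by
      ext s; simp
    rw [this]
    exact hyperplane_null hm t
  have key : Tendsto (fun t' : ℝ => ∫ s : Fin m → ℝ,
      FF c s * bf (c (Fin.last m)) (t' - ∑ r, s r)) (𝓝 t)
      (𝓝 (∫ s : Fin m → ℝ, FF c s * bf (c (Fin.last m)) (t - ∑ r, s r))) := by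
    apply tendsto_integral_filter_of_dominated_convergence (fun s => ‖FF c s‖)
    · filter_upwards with t'
      exact ((FF_meas c).mul ((bf_measurable _).comp
        (measurable_const.sub sum_meas))).aestronglyMeasurable
    · filter_upwards with t'
      filter_upwards with s
      rw [norm_mul]
      calc ‖FF c s‖ * ‖bf (c (Fin.last m)) (t' - ∑ r, s r)‖
          ≤ ‖FF c s‖ * 1 := by
            apply mul_le_mul_of_nonneg_left (bf_norm_le_one (hc _).le _) (norm_nonneg _)
        _ = ‖FF c s‖ := mul_one _
    · exact (FF_int hc).norm
    · filter_upwards [hnull] with s hs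
      have h1 : t - ∑ r, s r ≠ 0 := sub_ne_zero.2 (Ne.symm hs)
      have h2 : ContinuousAt (fun t' : ℝ => bf (c (Fin.last m)) (t' - ∑ r, s r)) t :=
        ContinuousAt.comp (g := bf (c (Fin.last m))) (f := fun t' : ℝ => t' - ∑ r, s r)
          (bf_continuousAt h1) ((continuous_sub_right _).continuousAt)
      exact (continuousAt_const.mul h2)
  exact key

lemma gg_fourier_int {c : Fin (m+1) → ℂ} {k : ℝ} (hk : 0 < k) (him : ∀ r, (c r).im = k)
    (hm : 1 ≤ m) : Integrable (𝓕 (gg c)) := by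
  obtain ⟨n, rfl⟩ : ∃ n, m = n + 1 := ⟨m - 1, (Nat.succ_pred_eq_of_pos hm).symm⟩
  have hc : ∀ r, 0 < (c r).im := fun r => (him r) ▸ hk
  have hnorm : ∀ (r : Fin (n+2)) (ξ : ℝ),
      ‖Complex.I * (c r - 2 * π * ξ)⁻¹‖ = ‖c r - 2 * π * ξ‖⁻¹ := by
    intro r ξ
    rw [norm_mul, norm_inv, Complex.norm_I, one_mul]
  have him' : ∀ (r : Fin (n+2)) (ξ : ℝ), (c r - 2 * π * ξ).im = k := by
    intro r ξ
    simp [Complex.sub_im, him r]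
  have hlb : ∀ (r : Fin (n+2)) (ξ : ℝ), k ≤ ‖c r - 2 * π * ξ‖ := by
    intro r ξ
    calc k = |(c r - 2 * π * ξ).im| := by rw [him' r ξ]; exact (abs_of_pos hk).symm
      _ ≤ ‖_‖ := Complex.abs_im_le_norm _
      _ = ‖_‖ := rfl
  have hfle : ∀ (r : Fin (n+2)) (ξ : ℝ), ‖c r - 2 * π * ξ‖⁻¹ ≤ k⁻¹ := by
    intro r ξ
    exact inv_anti₀ hk (hlb r ξ)
  have hsq : ∀ (r : Fin (n+2)) (ξ : ℝ),
      (‖c r - 2 * π * ξ‖⁻¹)^2 = (((c r).re - 2*π*ξ)^2 + k^2)⁻¹ := by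
    intro r ξ
    rw [inv_pow]
    congr 1
    rw [Complex.sq_norm, Complex.normSq_apply]
    simp only [Complex.sub_re, Complex.sub_im, him r, Complex.mul_re, Complex.mul_im,
      Complex.ofReal_re, Complex.ofReal_im, Complex.re_ofNat, Complex.im_ofNat]
    ring_nf
  have hQint : ∀ a : ℝ, Integrable (fun ξ : ℝ => ((a - 2*π*ξ)^2 + k^2)⁻¹) :=
    fun a => Q_integrable a hk
  have hBint : Integrable (fun ξ : ℝ => k⁻¹^n *
      (((((c 0).re - 2*π*ξ)^2 + k^2)⁻¹ + (((c (Fin.last (n+1))).re - 2*π*ξ)^2 + k^2)⁻¹)/2)) :=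
    (((hQint (c 0).re).add (hQint (c (Fin.last (n+1))).re)).div_const 2).const_mul _
  have hfgg : 𝓕 (gg c) = fun ξ : ℝ => ∏ r : Fin (n+2), (Complex.I * (c r - 2 * (π:ℂ) * (ξ:ℂ))⁻¹) :=
    funext (gg_fourier hc)
  rw [hfgg]
  apply Integrable.mono' hBint
  · apply Measurable.aestronglyMeasurable
    apply Finset.measurable_prod
    intro r _
    apply measurable_const.mul
    apply Measurable.inv
    apply measurable_const.sub
    fun_prop
  · filter_upwards with ξ
    have hqnn : ∀ r : Fin (n+2), 0 ≤ ‖c r - 2 * π * ξ‖⁻¹ :=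
      fun r => inv_nonneg.2 (norm_nonneg _)
    rw [norm_prod]
    calc ∏ r : Fin (n+2), ‖Complex.I * (c r - 2 * π * ξ)⁻¹‖
        = ∏ r : Fin (n+2), ‖c r - 2 * π * ξ‖⁻¹ :=
          Finset.prod_congr rfl fun r _ => hnorm r ξ
      _ = ‖c 0 - 2 * π * ξ‖⁻¹ * ((∏ j : Fin n, ‖c j.castSucc.succ - 2 * π * ξ‖⁻¹)
            * ‖c (Fin.last (n+1)) - 2 * π * ξ‖⁻¹) := by
          rw [Fin.prod_univ_succ, Fin.prod_univ_castSucc, Fin.succ_last]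
      _ ≤ ‖c 0 - 2 * π * ξ‖⁻¹ * (k⁻¹^n * ‖c (Fin.last (n+1)) - 2 * π * ξ‖⁻¹) := by
          apply mul_le_mul_of_nonneg_left _ (hqnn 0)
          apply mul_le_mul_of_nonneg_right _ (hqnn _)
          calc ∏ j : Fin n, ‖c j.castSucc.succ - 2 * π * ξ‖⁻¹
              ≤ ∏ _j : Fin n, k⁻¹ :=
                Finset.prod_le_prod (fun j _ => hqnn _) (fun j _ => hfle _ ξ)
            _ = k⁻¹^n := by rw [Finset.prod_const, Finset.card_univ, Fintype.card_fin]
      _ ≤ k⁻¹^n * (((((c 0).re - 2*π*ξ)^2 + k^2)⁻¹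
            + (((c (Fin.last (n+1))).re - 2*π*ξ)^2 + k^2)⁻¹)/2) := by
          rw [show ‖c 0 - 2 * π * ξ‖⁻¹ * (k⁻¹^n * ‖c (Fin.last (n+1)) - 2 * π * ξ‖⁻¹)
              = k⁻¹^n * (‖c 0 - 2 * π * ξ‖⁻¹ * ‖c (Fin.last (n+1)) - 2 * π * ξ‖⁻¹) from by ring]
          apply mul_le_mul_of_nonneg_left _ (by positivity)
          rw [← hsq 0 ξ, ← hsq (Fin.last (n+1)) ξ]
          nlinarith [sq_nonneg (‖c 0 - 2 * π * ξ‖⁻¹ - ‖c (Fin.last (n+1)) - 2 * π * ξ‖⁻¹),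
            hqnn 0, hqnn (Fin.last (n+1))]


lemma master {c : Fin (m+1) → ℂ} {k : ℝ} (hk : 0 < k) (him : ∀ r, (c r).im = k)
    (hm : 1 ≤ m) {t : ℝ} (ht : t ≠ 0) :
    (∫ α : ℝ, (∏ r : Fin (m+1), ((α : ℂ) + c r)⁻¹) * Complex.exp (-(Complex.I * (α:ℂ) * (t:ℂ))))
      = 2 * (π:ℂ) * (Complex.I ^ (m+1))⁻¹ * gg c t := by
  have hc : ∀ r, 0 < (c r).im := fun r => (him r) ▸ hk
  set h : ℝ → ℂ := fun α => (∏ r : Fin (m+1), ((α : ℂ) + c r)⁻¹)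
    * Complex.exp (-(Complex.I * (α:ℂ) * (t:ℂ))) with hh
  have e1 : (∫ ξ : ℝ, h ((-(2*π)) * ξ)) = |(-(2*π))⁻¹| • ∫ α, h α :=
    MeasureTheory.Measure.integral_comp_mul_left h (-(2*π))
  have habs : |(-(2*π : ℝ))⁻¹| = (2*π)⁻¹ := by
    rw [abs_inv, abs_neg, abs_of_pos (by positivity)]
  have e2 : ∫ α, h α = (2*π : ℝ) • ∫ ξ : ℝ, h ((-(2*π)) * ξ) := by
    rw [e1, habs, smul_smul, mul_inv_cancel₀ (by positivity : (2*π:ℝ) ≠ 0), one_smul]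
  have hIne : (Complex.I : ℂ)^(m+1) ≠ 0 := pow_ne_zero _ Complex.I_ne_zero
  have e3 : ∀ ξ : ℝ, h ((-(2*π)) * ξ) = (Complex.I^(m+1))⁻¹ *
      (Complex.exp (↑(2 * π * (ξ * t)) * Complex.I) * 𝓕 (gg c) ξ) := by
    intro ξ
    rw [gg_fourier hc ξ, hh]
    simp only
    rw [Finset.prod_mul_distrib, Finset.prod_const, Finset.card_univ, Fintype.card_fin]
    have hprod : ∀ r : Fin (m+1), (((-(2*π)*ξ : ℝ) : ℂ) + c r)⁻¹ = (c r - 2*(π:ℂ)*(ξ:ℂ))⁻¹ := by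
      intro r; congr 1; push_cast; ring
    have hexp : Complex.exp (-(Complex.I * ((-(2*π)*ξ : ℝ) : ℂ) * t))
        = Complex.exp (↑(2*π*(ξ*t)) * Complex.I) := by
      congr 1; push_cast; ring
    rw [Finset.prod_congr rfl (fun r _ => hprod r), hexp]
    field_simp
  have e4 : (∫ ξ : ℝ, Complex.exp (↑(2 * π * (ξ * t)) * Complex.I) * 𝓕 (gg c) ξ)
      = 𝓕⁻ (𝓕 (gg c)) t := by
    rw [Real.fourierInv_eq']
    apply integral_congr_ae
    filter_upwards with ξ
    rw [smul_eq_mul]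
    norm_num
    left; ring_nf
  rw [e2]
  rw [show (∫ ξ : ℝ, h ((-(2*π)) * ξ)) = ∫ ξ : ℝ, (Complex.I^(m+1))⁻¹ *
      (Complex.exp (↑(2 * π * (ξ * t)) * Complex.I) * 𝓕 (gg c) ξ) from
    integral_congr_ae (Filter.Eventually.of_forall e3)]
  rw [integral_const_mul, e4,
    (gg_int hc).fourierInv_fourier_eq (gg_fourier_int hk him hm) (gg_contAt hc hm ht)]
  rw [Complex.real_smul]
  push_cast
  ring

lemma gg_neg {c : Fin (m+1) → ℂ} {t : ℝ} (ht : t < 0) : gg c t = 0 := by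
  rw [gg]
  rw [show (fun s : Fin m → ℝ => FF c s * bf (c (Fin.last m)) (t - ∑ r, s r))
      = fun _ => (0:ℂ) from ?_]
  · exact integral_zero _ _
  funext s
  by_cases hall : ∀ r, 0 ≤ s r
  · have hsum : 0 ≤ ∑ r, s r := Finset.sum_nonneg fun r _ => hall r
    rw [bf_of_neg (by linarith), mul_zero]
  · push_neg at hall
    obtain ⟨r, hr⟩ := hall
    rw [FF, Finset.prod_eq_zero (Finset.mem_univ r) (bf_of_neg hr), zero_mul]


lemma simplex_measurable (m : ℕ) (t : ℝ) :
    MeasurableSet {s : Fin m → ℝ | (∀ r, 0 ≤ s r) ∧ ∑ r, s r ≤ t} := by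
  rw [show {s : Fin m → ℝ | (∀ r, 0 ≤ s r) ∧ ∑ r, s r ≤ t}
      = (⋂ r, {s : Fin m → ℝ | 0 ≤ s r}) ∩ {s : Fin m → ℝ | ∑ r, s r ≤ t} from by ext s; simp]
  exact (MeasurableSet.iInter fun r =>
    measurableSet_le measurable_const (measurable_pi_apply r)).inter
    (measurableSet_le sum_meas measurable_const)

lemma gg_pos_eq {T : ℝ} (hT : 0 < T) (ω : Fin (m+1) → ℝ) {t : ℝ} (ht : 0 < t) :
    gg (fun r => (ω r : ℂ) + Complex.I / (T:ℂ)) t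
      = ↑(Real.exp (-(t/T))) *
        ∫ s in {s : Fin m → ℝ | (∀ r, 0 ≤ s r) ∧ ∑ r, s r ≤ t},
          Complex.exp (Complex.I * ((∑ r : Fin m, s r * ω r.castSucc : ℝ) : ℂ)) *
            Complex.exp (Complex.I * (((t - ∑ r : Fin m, s r) * ω (Fin.last m) : ℝ) : ℂ)) := by
  set c : Fin (m+1) → ℂ := fun r => (ω r : ℂ) + Complex.I / (T:ℂ) with hcdef
  set A : Set (Fin m → ℝ) := {s : Fin m → ℝ | (∀ r, 0 ≤ s r) ∧ ∑ r, s r ≤ t} with hA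
  have hTne : (T:ℂ) ≠ 0 := Complex.ofReal_ne_zero.2 hT.ne'
  have key : ∀ (x w : ℝ), Complex.I * ↑x * ((w:ℂ) + Complex.I/(T:ℂ))
      = Complex.I * ↑(x * w) + ↑(-(x/T)) := by
    intro x w
    have hI : Complex.I * Complex.I = -1 := Complex.I_mul_I
    push_cast
    field_simp
    ring_nf
    rw [Complex.I_sq]
    ring
  have hpt : ∀ s : Fin m → ℝ,
      FF c s * bf (c (Fin.last m)) (t - ∑ r, s r)
      = Set.indicator A (fun s : Fin m → ℝ => ↑(Real.exp (-(t/T))) *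
          (Complex.exp (Complex.I * ((∑ r : Fin m, s r * ω r.castSucc : ℝ) : ℂ)) *
            Complex.exp (Complex.I * (((t - ∑ r : Fin m, s r) * ω (Fin.last m) : ℝ) : ℂ)))) s := by
    intro s
    by_cases hs : s ∈ A
    · rw [Set.indicator_of_mem hs]
      obtain ⟨hpos, hsum⟩ := hs
      have hFF : FF c s = ∏ r : Fin m, Complex.exp (Complex.I * ↑(s r * ω r.castSucc)
          + ↑(-(s r / T))) := by
        rw [FF]
        refine Finset.prod_congr rfl fun r _ => ?_
        rw [bf_of_nonneg (hpos r), hcdef, key]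
      have hbf : bf (c (Fin.last m)) (t - ∑ r, s r)
          = Complex.exp (Complex.I * ↑((t - ∑ r, s r) * ω (Fin.last m))
              + ↑(-((t - ∑ r, s r) / T))) := by
        rw [bf_of_nonneg (by linarith), hcdef, key]
      rw [hFF, hbf]
      rw [← Complex.exp_sum, ← Complex.exp_add, Complex.ofReal_exp, ← Complex.exp_add,
        ← Complex.exp_add]
      congr 1
      rw [Finset.sum_add_distrib]
      push_cast
      rw [show ∑ x : Fin m, -((s x : ℂ)/(T:ℂ)) = -((∑ x : Fin m, (s x : ℂ))/(T:ℂ)) by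
        simp only [← neg_div]
        rw [← Finset.sum_div, Finset.sum_neg_distrib, neg_div]]
      rw [Finset.mul_sum]
      simp only [← mul_assoc]
      ring
    · rw [Set.indicator_of_notMem hs]
      rw [hA, Set.mem_setOf_eq, not_and_or] at hs
      rcases hs with hs | hs
      · push_neg at hs
        obtain ⟨r, hr⟩ := hs
        rw [FF, Finset.prod_eq_zero (Finset.mem_univ r) (bf_of_neg hr), zero_mul]
      · push_neg at hs
        rw [bf_of_neg (by linarith), mul_zero]
  rw [gg]
  rw [integral_congr_ae (Filter.Eventually.of_forall hpt)]
  rw [integral_indicator (simplex_measurable m t)]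
  rw [integral_const_mul]

end Stmt8Aux

open Stmt8Aux in
theorem stmt8 (m : ℕ) (hm : 1 ≤ m) (ω : Fin (m + 1) → ℝ) (T : ℝ) (hT : 0 < T) :
    (∀ t : ℝ, 0 < t →
      (∫ s in {s : Fin m → ℝ | (∀ r, 0 ≤ s r) ∧ ∑ r, s r ≤ t},
        Complex.exp (Complex.I * ((∑ r : Fin m, s r * ω r.castSucc : ℝ) : ℂ)) *
          Complex.exp (Complex.I * (((t - ∑ r : Fin m, s r) * ω (Fin.last m) : ℝ) : ℂ))) =
        ((Real.exp (t / T) / (2 * Real.pi) : ℝ) : ℂ) * Complex.I ^ (m + 1) *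
          ∫ α : ℝ, (∏ r : Fin (m + 1), ((α : ℂ) + (ω r : ℂ) + Complex.I / (T : ℂ))⁻¹) *
            Complex.exp (-(Complex.I * (α : ℂ) * (t : ℂ)))) ∧
      ∀ t : ℝ, t < 0 →
        (∫ α : ℝ, (∏ r : Fin (m + 1), ((α : ℂ) + (ω r : ℂ) + Complex.I / (T : ℂ))⁻¹) *
          Complex.exp (-(Complex.I * (α : ℂ) * (t : ℂ)))) = 0 := by
  set c : Fin (m+1) → ℂ := fun r => (ω r : ℂ) + Complex.I / (T:ℂ) with hc
  have him : ∀ r, (c r).im = T⁻¹ := by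
    intro r
    rw [hc]
    simp only [div_eq_mul_inv, ← Complex.ofReal_inv]
    simp
  have hk : (0:ℝ) < T⁻¹ := inv_pos.2 hT
  have hmatch : ∀ t : ℝ,
      (∫ α : ℝ, (∏ r : Fin (m + 1), ((α : ℂ) + (ω r : ℂ) + Complex.I / (T : ℂ))⁻¹) *
          Complex.exp (-(Complex.I * (α : ℂ) * (t : ℂ))))
        = ∫ α : ℝ, (∏ r : Fin (m + 1), ((α : ℂ) + c r)⁻¹) *
            Complex.exp (-(Complex.I * (α : ℂ) * (t : ℂ))) := by
    intro t
    apply integral_congr_ae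
    filter_upwards with α
    congr 1
    exact Finset.prod_congr rfl fun r _ => by rw [hc, add_assoc]
  constructor
  · intro t ht
    rw [hmatch t, master hk him hm ht.ne', gg_pos_eq hT ω ht]
    have hIne : (Complex.I:ℂ)^(m+1) ≠ 0 := pow_ne_zero _ Complex.I_ne_zero
    have hπ : (π:ℂ) ≠ 0 := Complex.ofReal_ne_zero.2 Real.pi_ne_zero
    rw [Real.exp_neg, Complex.ofReal_inv]
    push_cast
    field_simp
    ring
    congr 1 with s
    ring_nf
  · intro t ht
    rw [hmatch t, master hk him hm ht.ne, gg_neg ht, mul_zero]
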